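/- Let n ≥ 1, let Q ∈ ℝ[X_1,…,X_n] be homogeneous of degree d, and let N ≥ d. Suppose V : ℕⁿ → ℝ satisfies, for every probability distribution p on [n], E[V(Φ)] = Q(p_1,…,p_n), where Φ is the fingerprint of an N-sample from p. Then V(φ) = U_N Q(φ) for every φ ∈ ℕⁿ with ∑_i φ_i = N. (That is, U_N Q is the unique symmetric unbiased estimator for Q(p).) -/

import Mathlib

open Finset

/-- The fingerprint of a sample tuple: the count of occurrences of each element. -/
def fingerprint {N n : ℕ} (s : Fin N → Fin n) : Fin n → ℕ :=
  fun i => (Finset.univ.filter fun j => s j = i).card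

/-- The unbiased estimator `U_N Q` for a (homogeneous degree-`d`) polynomial `Q`,
evaluated at a fingerprint `φ`. -/
noncomputable def estU {n : ℕ} (N d : ℕ) (Q : MvPolynomial (Fin n) ℝ)
    (φ : Fin n → ℕ) : ℝ :=
  ∑ α ∈ Q.support, Q.coeff α *
    (((N - d).factorial : ℝ) * ∏ i, ((α i).factorial : ℝ)) / (N.factorial : ℝ) *
    ∏ i, ((φ i).choose (α i) : ℝ)

lemma prod_pow_fingerprint {N n : ℕ} {R : Type*} [CommMonoid R] (p : Fin n → R)
    (s : Fin N → Fin n) : ∏ j, p (s j) = ∏ i, p i ^ fingerprint s i := by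
  rw [← Finset.prod_fiberwise_of_maps_to (g := s) (t := univ) (fun x _ => mem_univ _)
    (fun j => p (s j))]
  refine Finset.prod_congr rfl fun i _ => ?_
  rw [fingerprint, ← Finset.prod_const]
  exact Finset.prod_congr rfl fun j hj => by rw [(mem_filter.mp hj).2]

lemma sum_fingerprint {N n : ℕ} (s : Fin N → Fin n) : ∑ i, fingerprint s i = N := by
  classical
  have := Finset.card_eq_sum_card_fiberwise (f := s) (s := univ) (t := univ)
    (fun x _ => mem_univ _)
  simpa [fingerprint] using this.symm

lemma digit_inj (M : ℕ) : ∀ (k : ℕ) (f g : ℕ → ℕ), (∀ i, f i < M) → (∀ i, g i < M) →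
    (∑ i ∈ range k, f i * M ^ i) = (∑ i ∈ range k, g i * M ^ i) → ∀ i < k, f i = g i := by
  intro k
  induction k with
  | zero => intro f g _ _ _ i hi; omega
  | succ k ih =>
    intro f g hf hg hsum i hi
    have key : ∀ h : ℕ → ℕ, (∑ i ∈ range (k+1), h i * M ^ i)
        = h 0 + M * ∑ i ∈ range k, h (i+1) * M ^ i := by
      intro h
      rw [Finset.sum_range_succ' (fun i => h i * M ^ i) k]
      rw [Finset.mul_sum]
      simp only [pow_succ, Finset.mul_sum, pow_zero, mul_one]
      rw [Nat.add_comm]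
      congr 1
      exact Finset.sum_congr rfl fun x _ => by ring
    rw [key f, key g] at hsum
    have h0 : f 0 = g 0 := by
      have := congrArg (· % M) hsum
      simpa [Nat.add_mul_mod_self_left, Nat.mod_eq_of_lt (hf 0), Nat.mod_eq_of_lt (hg 0)] using this
    have h1 : ∑ i ∈ range k, f (i+1) * M ^ i = ∑ i ∈ range k, g (i+1) * M ^ i := by
      have hM : 0 < M := lt_of_le_of_lt (Nat.zero_le _) (hf 0)
      have := congrArg (· / M) hsum
      simpa [h0, Nat.add_mul_div_left _ _ hM, Nat.div_eq_of_lt (hf 0), Nat.div_eq_of_lt (hg 0),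
        Nat.mul_div_cancel_left _ hM] using this
    rcases Nat.eq_zero_or_pos i with h | h
    · subst h; exact h0
    · obtain ⟨j, rfl⟩ := Nat.exists_eq_add_of_lt h
      have := ih (fun i => f (i+1)) (fun i => g (i+1)) (fun i => hf _) (fun i => hg _) h1 j (by omega)
      simpa [Nat.add_comm] using this

lemma indep {n N : ℕ} (hn : 0 < n) (c : (Fin n → ℕ) → ℝ)
    (h : ∀ p : Fin n → ℝ, (∀ i, 0 ≤ p i) → ∑ i, p i = 1 →
      ∑ φ ∈ piAntidiag (univ : Finset (Fin n)) N, c φ * ∏ i, p i ^ φ i = 0) :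
    ∀ φ ∈ piAntidiag (univ : Finset (Fin n)) N, c φ = 0 := by
  classical
  have : Nonempty (Fin n) := ⟨⟨0, hn⟩⟩
  set M := N + 1 with hM
  set A := piAntidiag (univ : Finset (Fin n)) N with hA
  set e : (Fin n → ℕ) → ℕ := fun φ => ∑ i, φ i * M ^ (i : ℕ) with he
  have hbound : ∀ φ ∈ A, ∀ i, φ i < M := by
    intro φ hφ i
    have hs := (mem_piAntidiag.mp hφ).1
    have : φ i ≤ N := by
      rw [← hs]; exact Finset.single_le_sum (fun j _ => Nat.zero_le _) (mem_univ i)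
    omega
  have hrange : ∀ φ : Fin n → ℕ,
      e φ = ∑ i ∈ range n, (if h : i < n then φ ⟨i, h⟩ else 0) * M ^ i := by
    intro φ
    rw [he, ← Fin.sum_univ_eq_sum_range (fun i => (if h : i < n then φ ⟨i, h⟩ else 0) * M ^ i) n]
    exact Finset.sum_congr rfl fun i _ => by simp [i.isLt]
  have hinj : ∀ φ ∈ A, ∀ ψ ∈ A, e φ = e ψ → φ = ψ := by
    intro φ hφ ψ hψ heq
    rw [hrange φ, hrange ψ] at heq
    funext i
    have := digit_inj M n _ _
      (fun j => by split <;> [exact hbound φ hφ _; omega])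
      (fun j => by split <;> [exact hbound ψ hψ _; omega]) heq i i.isLt
    simpa [i.isLt] using this
  set P : Polynomial ℝ := ∑ φ ∈ A, Polynomial.C (c φ) * Polynomial.X ^ e φ with hP
  have hroot : ∀ t ∈ Set.Ioo (0:ℝ) 1, P.IsRoot t := by
    intro t ht
    set q : Fin n → ℝ := fun i => t ^ (M ^ (i : ℕ)) with hq
    have hqpos : ∀ i, 0 < q i := fun i => pow_pos ht.1 _
    set T : ℝ := ∑ i, q i with hT
    have hTpos : 0 < T := Finset.sum_pos (fun i _ => hqpos i) univ_nonempty
    have hsum1 : ∑ i, q i / T = 1 := by rw [← Finset.sum_div]; exact div_self hTpos.ne'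
    have key := h (fun i => q i / T) (fun i => div_nonneg (hqpos i).le hTpos.le) hsum1
    have hprod : ∀ φ ∈ A, ∏ i, (q i / T) ^ φ i = t ^ e φ / T ^ N := by
      intro φ hφ
      have hs := (mem_piAntidiag.mp hφ).1
      rw [← hs]
      simp only [div_pow, Finset.prod_div_distrib]
      congr 1
      · rw [he]
        rw [← Finset.prod_pow_eq_pow_sum]
        exact Finset.prod_congr rfl fun i _ => by rw [hq, ← pow_mul, mul_comm]
      · exact Finset.prod_pow_eq_pow_sum _ _ _
    rw [Finset.sum_congr rfl (fun φ hφ => by rw [hprod φ hφ])] at key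
    have : P.eval t = (∑ φ ∈ A, c φ * (t ^ e φ / T ^ N)) * T ^ N := by
      rw [Finset.sum_mul, hP, Polynomial.eval_finset_sum]
      refine Finset.sum_congr rfl fun φ _ => ?_
      have hTN : (T : ℝ) ^ N ≠ 0 := pow_ne_zero _ hTpos.ne'
      field_simp
      simp
    rw [Polynomial.IsRoot, this, key, zero_mul]
  have hP0 : P = 0 := by
    refine Polynomial.eq_zero_of_infinite_isRoot P ?_
    exact Set.Infinite.mono (fun t ht => hroot t ht) (Set.Ioo_infinite (by norm_num))
  intro φ hφ
  have hc : P.coeff (e φ) = c φ := by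
    rw [hP, Polynomial.finset_sum_coeff]
    rw [Finset.sum_eq_single φ]
    · simp
    · intro ψ hψ hne
      simp only [Polynomial.coeff_C_mul, Polynomial.coeff_X_pow]
      rw [if_neg (fun hh => hne (hinj ψ hψ φ hφ hh.symm))]
      ring
    · intro hne; exact absurd hφ hne
  rw [← hc, hP0, Polynomial.coeff_zero]

noncomputable def Wcard (N n : ℕ) (φ : Fin n → ℕ) : ℕ :=
  (Finset.univ.filter fun s : Fin N → Fin n => fingerprint s = φ).card

lemma fingerprint_mem {N n : ℕ} (s : Fin N → Fin n) :
    fingerprint s ∈ piAntidiag (univ : Finset (Fin n)) N :=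
  mem_piAntidiag.mpr ⟨sum_fingerprint s, fun i _ => mem_univ i⟩

lemma group_sum {n N : ℕ} (p : Fin n → ℝ) (V : (Fin n → ℕ) → ℝ) :
    ∑ s : Fin N → Fin n, (∏ j, p (s j)) * V (fingerprint s)
      = ∑ φ ∈ piAntidiag (univ : Finset (Fin n)) N,
          (Wcard N n φ : ℝ) * (V φ * ∏ i, p i ^ φ i) := by
  classical
  rw [← Finset.sum_fiberwise_of_maps_to (g := fingerprint)
    (fun s _ => fingerprint_mem s) (fun s => (∏ j, p (s j)) * V (fingerprint s))]
  refine Finset.sum_congr rfl fun φ hφ => ?_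
  have hterm : ∀ s ∈ Finset.univ.filter fun s : Fin N → Fin n => fingerprint s = φ,
      (∏ j, p (s j)) * V (fingerprint s) = V φ * ∏ i, p i ^ φ i := by
    intro s hs
    have hfp : fingerprint s = φ := (mem_filter.mp hs).2
    rw [prod_pow_fingerprint, hfp]
    ring
  rw [Finset.sum_congr rfl hterm, Finset.sum_const, Wcard, nsmul_eq_mul]

lemma W_eq {n N : ℕ} (hn : 0 < n) :
    ∀ φ ∈ piAntidiag (univ : Finset (Fin n)) N,
      (Wcard N n φ : ℝ) = (Nat.multinomial univ φ : ℝ) := by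
  have key := indep (N := N) hn (fun φ => (Wcard N n φ : ℝ) - (Nat.multinomial univ φ : ℝ)) ?_
  · intro φ hφ
    have := key φ hφ
    linarith
  · intro p hp hs
    simp only [sub_mul, Finset.sum_sub_distrib]
    have h1 : ∑ φ ∈ piAntidiag (univ : Finset (Fin n)) N,
        (Wcard N n φ : ℝ) * ∏ i, p i ^ φ i = 1 := by
      have := (group_sum (N := N) p (fun _ => (1:ℝ))).symm
      simp only [mul_one, one_mul] at this
      rw [this]
      have : ∑ s : Fin N → Fin n, ∏ j, p (s j) = ∏ j : Fin N, ∑ i, p i := by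
        rw [Finset.prod_univ_sum]
        simp
      rw [this, hs]
      simp
    have h2 : ∑ φ ∈ piAntidiag (univ : Finset (Fin n)) N,
        (Nat.multinomial univ φ : ℝ) * ∏ i, p i ^ φ i = 1 := by
      have := Finset.sum_pow_eq_sum_piAntidiag (univ : Finset (Fin n)) p N
      rw [hs, one_pow] at this
      rw [← this]
    rw [h1, h2, sub_self]

lemma reindex_sum {n d N : ℕ} (hN : d ≤ N) (α : Fin n → ℕ) (hα : ∑ i, α i = d)
    (F : (Fin n → ℕ) → ℝ) :
    ∑ β ∈ piAntidiag (univ : Finset (Fin n)) (N - d), F (α + β)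
      = ∑ φ ∈ piAntidiag (univ : Finset (Fin n)) N, if ∀ i, α i ≤ φ i then F φ else 0 := by
  classical
  rw [← Finset.sum_filter]
  refine Finset.sum_bij' (fun β _ => α + β) (fun φ _ => φ - α) ?_ ?_ ?_ ?_ ?_
  · intro β hβ
    have hs := (mem_piAntidiag.mp hβ).1
    refine mem_filter.mpr ⟨mem_piAntidiag.mpr ⟨?_, fun i _ => mem_univ i⟩,
      fun i => Nat.le_add_right _ _⟩
    show ∑ i, (α i + β i) = N
    rw [Finset.sum_add_distrib, hα, hs]
    omega
  · intro φ hφ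
    obtain ⟨hφA, hle⟩ := mem_filter.mp hφ
    have hs := (mem_piAntidiag.mp hφA).1
    refine mem_piAntidiag.mpr ⟨?_, fun i _ => mem_univ i⟩
    show ∑ i, (φ i - α i) = N - d
    have h1 : ∑ i, (φ i - α i) = ∑ i, φ i - ∑ i, α i :=
      Finset.sum_tsub_distrib univ (fun i _ => hle i)
    rw [h1, hα, hs]
  · intro β hβ
    funext i
    show α i + β i - α i = β i
    omega
  · intro φ hφ
    have hle := (mem_filter.mp hφ).2
    funext i
    show α i + (φ i - α i) = φ i
    have := hle i
    omega
  · intro β hβ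
    rfl

theorem stmt11 {n : ℕ} (hn : 1 ≤ n) (d N : ℕ) (hN : d ≤ N)
    (Q : MvPolynomial (Fin n) ℝ) (hQ : Q.IsHomogeneous d)
    (V : (Fin n → ℕ) → ℝ)
    (hV : ∀ p : Fin n → ℝ, (∀ i, 0 ≤ p i) → ∑ i, p i = 1 →
      ∑ s : Fin N → Fin n, (∏ j, p (s j)) * V (fingerprint s)
        = MvPolynomial.eval p Q) :
    ∀ φ : Fin n → ℕ, ∑ i, φ i = N → V φ = estU N d Q φ := by
  classical
  -- degrees of support monomials
  have hdeg : ∀ α ∈ Q.support, ∑ i, α i = d := by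
    intro α hα
    have hcoeff : Q.coeff α ≠ 0 := MvPolynomial.mem_support_iff.mp hα
    by_contra hne
    refine hcoeff (hQ.coeff_eq_zero ?_)
    have : Finsupp.degree α = ∑ i, α i := by
      rw [Finsupp.degree]
      exact Finset.sum_subset (Finset.subset_univ _)
        (fun i _ hi => Finsupp.notMem_support_iff.mp hi)
    rw [this]
    exact hne
  set A := piAntidiag (univ : Finset (Fin n)) N with hA
  set r : (Fin n → ℕ) → ℝ := fun φ => ∑ α ∈ Q.support, Q.coeff α *
      (if ∀ i, α i ≤ φ i then (Nat.multinomial univ (fun i => φ i - α i) : ℝ) else 0) with hr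
  -- the identity for eval p Q on the simplex
  have hIdQ : ∀ p : Fin n → ℝ, (∀ i, 0 ≤ p i) → ∑ i, p i = 1 →
      MvPolynomial.eval p Q = ∑ φ ∈ A, r φ * ∏ i, p i ^ φ i := by
    intro p hp hs
    rw [MvPolynomial.eval_eq']
    have hterm : ∀ α ∈ Q.support, Q.coeff α * ∏ i, p i ^ α i
        = ∑ φ ∈ A, (Q.coeff α *
            (if ∀ i, α i ≤ φ i then (Nat.multinomial univ (fun i => φ i - α i) : ℝ) else 0))
            * ∏ i, p i ^ φ i := by
      intro α hα
      have hpow : (∏ i, p i ^ α i) = ∑ β ∈ piAntidiag (univ : Finset (Fin n)) (N - d),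
          (Nat.multinomial univ β : ℝ) * ∏ i, p i ^ (α i + β i) := by
        have hmt := Finset.sum_pow_eq_sum_piAntidiag (univ : Finset (Fin n)) p (N - d)
        rw [hs, one_pow] at hmt
        calc (∏ i, p i ^ α i) = (∏ i, p i ^ α i) * 1 := (mul_one _).symm
          _ = (∏ i, p i ^ α i) * ∑ β ∈ piAntidiag (univ : Finset (Fin n)) (N - d),
              (Nat.multinomial univ β : ℝ) * ∏ i, p i ^ β i := by rw [← hmt]
          _ = _ := by
              rw [Finset.mul_sum]
              refine Finset.sum_congr rfl fun β _ => ?_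
              rw [mul_left_comm]
              congr 1
              rw [← Finset.prod_mul_distrib]
              exact Finset.prod_congr rfl fun i _ => (pow_add _ _ _).symm
      rw [hpow, Finset.mul_sum]
      have hre := reindex_sum hN (fun i => α i) (hdeg α hα)
        (fun ψ => Q.coeff α * ((Nat.multinomial univ (fun i => ψ i - α i) : ℝ)
          * ∏ i, p i ^ ψ i))
      simp only [Pi.add_apply, Nat.add_sub_cancel_left] at hre
      rw [hre]
      refine Finset.sum_congr rfl fun φ _ => ?_
      split
      · ring
      · simp
    rw [Finset.sum_congr rfl hterm, Finset.sum_comm]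
    refine Finset.sum_congr rfl fun φ _ => ?_
    rw [hr, Finset.sum_mul]
  -- apply independence to conclude multinomial * V = r on A
  have hmain : ∀ φ ∈ A, (Nat.multinomial univ φ : ℝ) * V φ - r φ = 0 := by
    refine indep hn (fun φ => (Nat.multinomial univ φ : ℝ) * V φ - r φ) ?_
    intro p hp hs
    simp only [sub_mul, Finset.sum_sub_distrib]
    have h1 : ∑ φ ∈ A, (Nat.multinomial univ φ : ℝ) * V φ * ∏ i, p i ^ φ i
        = MvPolynomial.eval p Q := by
      rw [← hV p hp hs, group_sum p V]
      refine Finset.sum_congr rfl fun φ hφ => ?_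
      rw [← W_eq hn φ hφ]
      ring
    have h2 : ∑ φ ∈ A, r φ * ∏ i, p i ^ φ i = MvPolynomial.eval p Q := (hIdQ p hp hs).symm
    rw [h1, h2, sub_self]
  intro φ hφsum
  have hφA : φ ∈ A := mem_piAntidiag.mpr ⟨hφsum, fun i _ => mem_univ i⟩
  have hkey : (Nat.multinomial univ φ : ℝ) * V φ = r φ := by
    have := hmain φ hφA
    linarith
  -- now show multinomial φ * estU = r φ
  have hspecφ : ((Nat.multinomial univ φ : ℝ)) * ∏ i, ((φ i).factorial : ℝ)
      = (N.factorial : ℝ) := by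
    have := Nat.multinomial_spec (univ : Finset (Fin n)) φ
    rw [hφsum] at this
    calc ((Nat.multinomial univ φ : ℝ)) * ∏ i, ((φ i).factorial : ℝ)
        = ((∏ i, (φ i).factorial) * Nat.multinomial univ φ : ℕ) := by push_cast; ring
      _ = (N.factorial : ℝ) := by rw [this]
  have hest : (Nat.multinomial univ φ : ℝ) * estU N d Q φ = r φ := by
    rw [estU, hr, Finset.mul_sum]
    refine Finset.sum_congr rfl fun α hα => ?_
    by_cases hle : ∀ i, α i ≤ φ i
    · rw [if_pos hle]
      have hsub : ∑ i, (φ i - α i) = N - d := by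
        have h1 : ∑ i, (φ i - α i) = ∑ i, φ i - ∑ i, α i :=
          Finset.sum_tsub_distrib univ (fun i _ => hle i)
        rw [h1, hdeg α hα, hφsum]
      have hspecψ : ((Nat.multinomial univ (fun i => φ i - α i) : ℝ))
          * ∏ i, ((φ i - α i).factorial : ℝ) = ((N - d).factorial : ℝ) := by
        have := Nat.multinomial_spec (univ : Finset (Fin n)) (fun i => φ i - α i)
        rw [hsub] at this
        calc ((Nat.multinomial univ (fun i => φ i - α i) : ℝ))
            * ∏ i, ((φ i - α i).factorial : ℝ)
            = ((∏ i, (φ i - α i).factorial) * Nat.multinomial univ (fun i => φ i - α i) : ℕ) := by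
              push_cast; ring
          _ = ((N - d).factorial : ℝ) := by rw [this]
      have hchoose : (∏ i, ((φ i).choose (α i) : ℝ))
          = (∏ i, ((φ i).factorial : ℝ))
            / ((∏ i, ((α i).factorial : ℝ)) * ∏ i, ((φ i - α i).factorial : ℝ)) := by
        rw [← Finset.prod_mul_distrib, ← Finset.prod_div_distrib]
        exact Finset.prod_congr rfl fun i _ => Nat.cast_choose ℝ (hle i)
      set F := ∏ i, ((φ i).factorial : ℝ) with hF
      set a := ∏ i, ((α i).factorial : ℝ) with ha
      set b := ∏ i, ((φ i - α i).factorial : ℝ) with hb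
      have hFpos : 0 < F := Finset.prod_pos fun i _ => by positivity
      have hapos : 0 < a := Finset.prod_pos fun i _ => by positivity
      have hbpos : 0 < b := Finset.prod_pos fun i _ => by positivity
      have hNpos : (0:ℝ) < (N.factorial : ℝ) := by positivity
      rw [hchoose]
      -- goal : mult φ * (coeff * ((N-d)! * a) / N! * (F / (a*b))) = coeff * mult(φ-α)
      have hmφ : (Nat.multinomial univ φ : ℝ) = (N.factorial : ℝ) / F := by
        field_simp at hspecφ ⊢
        linarith [hspecφ]
      have hmψ : ((Nat.multinomial univ (fun i => φ i - α i) : ℝ))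
          = ((N - d).factorial : ℝ) / b := by
        field_simp at hspecψ ⊢
        linarith [hspecψ]
      rw [hmφ, hmψ]
      field_simp
    · rw [if_neg hle]
      push_neg at hle
      obtain ⟨i, hi⟩ := hle
      have : ((φ i).choose (α i) : ℝ) = 0 := by
        rw [Nat.choose_eq_zero_of_lt hi]; simp
      have hzero : (∏ i, ((φ i).choose (α i) : ℝ)) = 0 :=
        Finset.prod_eq_zero (mem_univ i) this
      rw [hzero]
      ring
  have hmpos : (0:ℝ) < (Nat.multinomial univ φ : ℝ) := by
    exact_mod_cast Nat.multinomial_pos _ _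
  have := hkey.trans hest.symm
  exact mul_left_cancel₀ hmpos.ne' this
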